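/- Let n ≥ 1, ε > 0, λ ∈ ℝ, σ > 0 and E ∈ ℝⁿ. Suppose v : ℝ × ℝⁿ → ℂ is a classical Schwartz solution of iε∂_t v + (ε²/2)Δv = λ|v|^{2σ}v. Define u : ℝ × ℝⁿ → ℂ by u(t,x) := v(t, x + (t²/2)E) · exp(−i(t(E·x) + (t³/6)|E|²)/ε). Then u is a classical Schwartz solution of iε∂_t u + (ε²/2)Δu = (E·x)u + λ|u|^{2σ}u, and u(0,·) = v(0,·). -/

import Mathlib

open MeasureTheory Real Complex
open scoped ENNReal NNReal

noncomputable section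

/-- `ℝⁿ`: n-dimensional Euclidean space. -/
abbrev Eucl (n : ℕ) := EuclideanSpace ℝ (Fin n)

/-- Partial derivative in the `j`-th coordinate direction. -/
def pd {n : ℕ} (j : Fin n) (f : Eucl n → ℂ) (x : Eucl n) : ℂ :=
  fderiv ℝ f x (EuclideanSpace.single j 1)

/-- Laplacian in the space variables. -/
def lap {n : ℕ} (f : Eucl n → ℂ) (x : Eucl n) : ℂ := ∑ j, pd j (pd j f) x

/-- A function agreeing with a Schwartz function. -/
def IsSchwartz {n : ℕ} (f : Eucl n → ℂ) : Prop :=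
  ∃ g : SchwartzMap (Eucl n) ℂ, ∀ x, f x = g x

/-- `u` is a classical Schwartz solution of
`i ε ∂ₜ u + (ε²/2) Δ u = V(x) u + lam |u|^(2σ) u` on `I × ℝⁿ`:
`u` is smooth on `I × ℝⁿ`, `u(t,·)` is Schwartz for each `t ∈ I`, and the
equation holds pointwise. -/
def IsSol {n : ℕ} (I : Set ℝ) (ε lam σ : ℝ) (V : Eucl n → ℝ) (u : ℝ → Eucl n → ℂ) : Prop :=
  ContDiffOn ℝ (⊤ : ℕ∞) (fun p : ℝ × Eucl n => u p.1 p.2) (I ×ˢ Set.univ) ∧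
  (∀ t ∈ I, IsSchwartz (u t)) ∧
  ∀ t ∈ I, ∀ x, Complex.I * ε * deriv (fun s => u s x) t + (ε^2/2) * lap (u t) x
    = (V x : ℝ) * u t x + (lam : ℝ) * ((‖u t x‖ ^ (2*σ) : ℝ) : ℂ) * u t x

variable {E' : Type*} [NormedAddCommGroup E'] [NormedSpace ℝ E']

lemma hasTemperateGrowth_expI (ℓ : E' →L[ℝ] ℝ) (b : ℂ) :
    Function.HasTemperateGrowth (fun x => Complex.exp (Complex.I * (ℓ x : ℂ) + b)) := by
  set g : E' → ℂ := fun x => Complex.exp (Complex.I * (ℓ x : ℂ) + b) with hg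
  set m : E' →L[ℝ] ℂ := Complex.I • (Complex.ofRealCLM.comp ℓ) with hm
  have hder : ∀ x, HasFDerivAt g (g x • m) x := by
    intro x
    have h1 : HasFDerivAt (fun x : E' => (ℓ x : ℂ)) (Complex.ofRealCLM.comp ℓ) x :=
      Complex.ofRealCLM.hasFDerivAt.comp x ℓ.hasFDerivAt
    have h2 : HasFDerivAt (fun x : E' => Complex.I * (ℓ x : ℂ) + b) m x :=
      (h1.const_mul Complex.I).add_const b
    exact h2.cexp
  have hcont : ContDiff ℝ ((⊤ : ℕ∞) : WithTop ℕ∞) g := by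
    apply Complex.contDiff_exp.comp
    exact (contDiff_const.mul (Complex.ofRealCLM.contDiff.comp ℓ.contDiff)).add contDiff_const
  have hnorm : ∀ x, ‖g x‖ = Real.exp b.re := by
    intro x
    simp [hg, Complex.norm_exp]
  have key : ∀ k : ℕ, ∃ C, ∀ x, ‖iteratedFDeriv ℝ k g x‖ ≤ C := by
    intro k
    induction k with
    | zero => exact ⟨Real.exp b.re, fun x => by simpa using (hnorm x).le⟩
    | succ k ih =>
      obtain ⟨C, hC⟩ := ih
      set φ : ℂ →L[ℝ] (E' →L[ℝ] ℂ) := (ContinuousLinearMap.id ℝ ℂ).smulRight m with hφ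
      have hfg : fderiv ℝ g = φ ∘ g := by
        funext x
        simp only [(hder x).fderiv, Function.comp]
        rfl
      refine ⟨‖φ‖ * C, fun x => ?_⟩
      rw [← norm_iteratedFDeriv_fderiv, hfg,
        φ.iteratedFDeriv_comp_left (x := x) hcont.contDiffAt (mod_cast le_top)]
      exact (φ.norm_compContinuousMultilinearMap_le _).trans
        (mul_le_mul_of_nonneg_left (hC x) (norm_nonneg φ))
  refine ⟨hcont, fun k => ?_⟩
  obtain ⟨C, hC⟩ := key k
  refine ⟨0, C, fun x => ?_⟩
  simpa using hC x

lemma hasTemperateGrowth_add_const (c : E') :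
    Function.HasTemperateGrowth (fun x : E' => x + c) := by
  have hder : ∀ x : E', HasFDerivAt (fun x : E' => x + c) (ContinuousLinearMap.id ℝ E') x :=
    fun x => (hasFDerivAt_id x).add_const c
  apply Function.HasTemperateGrowth.of_fderiv (k := 1) (C := 1 + ‖c‖)
  · have : fderiv ℝ (fun x : E' => x + c) = fun _ => ContinuousLinearMap.id ℝ E' :=
      funext fun x => (hder x).fderiv
    rw [this]
    exact .const _
  · exact fun x => (hder x).differentiableAt
  · intro x
    have := norm_add_le x c
    have h1 : (0:ℝ) ≤ ‖x‖ := norm_nonneg _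
    have h2 : (0:ℝ) ≤ ‖c‖ := norm_nonneg _
    nlinarith

lemma antilipschitz_add_const (c : E') : AntilipschitzWith 1 (fun x : E' => x + c) :=
  AntilipschitzWith.of_le_mul_dist (fun x y => by simp [dist_add_right])

lemma isSchwartz_mul_exp {n : ℕ} (g : SchwartzMap (Eucl n) ℂ) (c : Eucl n)
    (ℓ : Eucl n →L[ℝ] ℝ) (b : ℂ) :
    IsSchwartz (fun x => (g (x + c)) * Complex.exp (Complex.I * (ℓ x : ℂ) + b)) := by
  refine ⟨SchwartzMap.bilinLeftCLM (ContinuousLinearMap.mul ℝ ℂ) (hasTemperateGrowth_expI ℓ b)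
    (SchwartzMap.compCLMOfAntilipschitz ℝ (hasTemperateGrowth_add_const c)
      (antilipschitz_add_const c) g), fun x => ?_⟩
  rfl


set_option maxHeartbeats 2000000 in
/-- **Avron–Herbst formula (nonlinear).** If `v` is a classical Schwartz solution of the
free NLS `iε∂ₜv + (ε²/2)Δv = λ|v|^{2σ}v` and
`u(t,x) := v(t, x + (t²/2)E) exp(−i(t(E·x) + (t³/6)|E|²)/ε)`, then `u` is a classical
Schwartz solution of the NLS with Stark potential `V(x) = E·x`, with `u(0,·) = v(0,·)`. -/
theorem avron_herbst
    (n : ℕ) (hn : 1 ≤ n) (ε lam σ : ℝ) (hε : 0 < ε) (hσ : 0 < σ)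
    (E : Eucl n) (v u : ℝ → Eucl n → ℂ)
    (hv : IsSol Set.univ ε lam σ (fun _ => 0) v)
    (hu : u = fun t x => v t (x + (t^2/2) • E) *
      Complex.exp (-(Complex.I) *
        (((t * (inner ℝ E x : ℝ) + t^3/6 * ‖E‖^2) / ε : ℝ) : ℂ))) :
    IsSol Set.univ ε lam σ (fun x => (inner ℝ E x : ℝ)) u ∧ ∀ x, u 0 x = v 0 x := by
  obtain ⟨hv1, hv2, hv3⟩ := hv
  have hεC : (ε : ℂ) ≠ 0 := Complex.ofReal_ne_zero.mpr hε.ne'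
  subst hu
  have hF : ContDiff ℝ ((⊤ : ℕ∞) : WithTop ℕ∞) (fun p : ℝ × Eucl n => v p.1 p.2) := by
    rw [← contDiffOn_univ, ← Set.univ_prod_univ]; exact hv1
  set F : ℝ × Eucl n → ℂ := fun p => v p.1 p.2 with hFdef
  constructor
  constructor
  · -- smoothness
    apply ContDiffOn.mono (s := Set.univ) _ (Set.subset_univ _)
    rw [contDiffOn_univ]
    apply ContDiff.mul
    · exact hF.comp (contDiff_fst.prodMk (contDiff_snd.add
        (((contDiff_fst.pow 2).div_const 2).smul contDiff_const)))
    · apply Complex.contDiff_exp.comp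
      apply ContDiff.mul contDiff_const
      apply Complex.ofRealCLM.contDiff.comp
      exact ((contDiff_fst.mul (contDiff_const.inner ℝ contDiff_snd)).add
        (((contDiff_fst.pow 3).div_const 6).mul contDiff_const)).div_const ε
  constructor
  · -- Schwartz
    intro t _
    obtain ⟨g, hg⟩ := hv2 t trivial
    have key := isSchwartz_mul_exp g ((t^2/2) • E)
      ((-t/ε) • (innerSL ℝ E)) (-(Complex.I) * ((t^3/6 * ‖E‖^2 / ε : ℝ) : ℂ))
    obtain ⟨G, hG⟩ := key
    refine ⟨G, fun x => ?_⟩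
    rw [← hG x]
    simp only []
    rw [hg]
    congr 2
    simp only [ContinuousLinearMap.smul_apply, innerSL_apply_apply, smul_eq_mul, real_smul]
    push_cast
    field_simp
    ring
  · -- the PDE
    intro t _ x
    beta_reduce
    set c : Eucl n := (t^2/2) • E with hc
    set a : ℝ := (inner ℝ E x : ℝ) with ha
    set b : ℝ := ‖E‖^2 with hb
    set y : Eucl n := x + c with hy
    set w : Eucl n → ℂ := v t with hwdef
    have hwsm : ContDiff ℝ ((⊤ : ℕ∞) : WithTop ℕ∞) w :=
      hF.comp ((contDiff_const (c := t)).prodMk contDiff_id)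
    have hFd : HasFDerivAt F (fderiv ℝ F (t, y)) (t, y) :=
      ((hF.differentiable (by simp)) (t, y)).hasFDerivAt
    -- time derivative
    have hγ : HasDerivAt (fun s : ℝ => ((s : ℝ), x + (s^2/2) • E)) ((1:ℝ), t • E) t := by
      apply (hasDerivAt_id t).prodMk
      have h1 : HasDerivAt (fun s : ℝ => (s^2/2) • E) ((2 * t^1 / 2) • E) t :=
        ((hasDerivAt_pow 2 t).div_const 2).smul_const E
      have h2 : (2 * t^1 / 2 : ℝ) = t := by ring
      rw [h2] at h1
      exact h1.const_add x
    have hg1 : HasDerivAt (fun s => v s (x + (s^2/2) • E)) (fderiv ℝ F (t, y) (1, t • E)) t := by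
      have := hFd.comp_hasDerivAt t hγ; exact this
    have hg2 : HasDerivAt
        (fun s : ℝ => Complex.exp (-(Complex.I) * (((s * a + s^3/6 * b)/ε : ℝ) : ℂ)))
        (Complex.exp (-(Complex.I) * (((t * a + t^3/6 * b)/ε : ℝ) : ℂ)) *
          (-(Complex.I) * (((a + t^2/2 * b)/ε : ℝ) : ℂ))) t := by
      have hr : HasDerivAt (fun s : ℝ => (s * a + s^3/6 * b)/ε)
          ((1 * a + 3 * t^2 / 6 * b)/ε) t :=
        (((hasDerivAt_id' (x := t)).mul_const a).add
          (((hasDerivAt_pow 3 t).div_const 6).mul_const b)).div_const ε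
      have h2 : (1 * a + 3 * t^2 / 6 * b)/ε = (a + t^2/2 * b)/ε := by ring
      rw [h2] at hr
      exact (hr.ofReal_comp.const_mul (-(Complex.I))).cexp
    have hder_t := (hg1.mul hg2).deriv
    simp only [Pi.mul_def] at hder_t
    rw [hder_t]
    -- spatial derivatives
    set Bf : Eucl n → ℂ := fun z =>
      Complex.exp (-(Complex.I) * (((t * (inner ℝ E z : ℝ) + t^3/6 * b)/ε : ℝ) : ℂ)) with hBfdef
    set B : ℂ := Complex.exp (-(Complex.I) * (((t * a + t^3/6 * b)/ε : ℝ) : ℂ)) with hBdef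
    have hBfx : Bf x = B := rfl
    set D : Eucl n →L[ℝ] ℝ := (t/ε) • (innerSL ℝ E) with hD
    set m : Eucl n →L[ℝ] ℂ := (-(Complex.I)) • (Complex.ofRealCLM.comp D) with hm
    have hlin : ∀ z : Eucl n,
        HasFDerivAt (fun z : Eucl n => (t * (inner ℝ E z : ℝ) + t^3/6 * b)/ε) D z := by
      intro z
      have heq : (fun z : Eucl n => (t * (inner ℝ E z : ℝ) + t^3/6 * b)/ε)
          = fun z => D z + (t^3/6 * b)/ε := by
        funext z'
        simp only [hD, ContinuousLinearMap.smul_apply, innerSL_apply_apply, smul_eq_mul]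
        field_simp
      rw [heq]
      exact D.hasFDerivAt.add_const _
    have hBfz : ∀ z, HasFDerivAt Bf (Bf z • m) z := by
      intro z
      have h1 : HasFDerivAt (fun z : Eucl n => (((t * (inner ℝ E z : ℝ) + t^3/6 * b)/ε : ℝ) : ℂ))
          (Complex.ofRealCLM.comp D) z := Complex.ofRealCLM.hasFDerivAt.comp z (hlin z)
      exact (h1.const_mul (-(Complex.I))).cexp
    set κ : ℂ := -(Complex.I) * ((t/ε : ℝ) : ℂ) with hκ
    have hmj : ∀ j : Fin n, m (EuclideanSpace.single j 1) = κ * ((E j : ℝ) : ℂ) := by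
      intro j
      simp only [hm, hD, hκ, ContinuousLinearMap.smul_apply, ContinuousLinearMap.coe_comp',
        Function.comp_apply, Complex.ofRealCLM_apply, innerSL_apply_apply]
      rw [real_inner_comm, EuclideanSpace.inner_single_left]
      simp only [smul_eq_mul, map_one, one_mul]
      push_cast
      ring
    have hwdiff : Differentiable ℝ w := hwsm.differentiable (by simp)
    have hshift : ∀ (ψ : Eucl n → ℂ), Differentiable ℝ ψ → ∀ z : Eucl n,
        HasFDerivAt (fun z => ψ (z + c)) (fderiv ℝ ψ (z + c)) z := by
      intro ψ hψ z
      have h := (hψ (z + c)).hasFDerivAt.comp z ((hasFDerivAt_id z).add_const c)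
      exact h
    have hpdwsm : ∀ j : Fin n, ContDiff ℝ ((⊤ : ℕ∞) : WithTop ℕ∞)
        (fun z => fderiv ℝ w z (EuclideanSpace.single j 1)) := fun j =>
      (hwsm.fderiv_right (by exact_mod_cast le_top)).clm_apply contDiff_const
    set Uf : Eucl n → ℂ := fun z => w (z + c) * Bf z with hUfdef
    have hU1 : ∀ z, HasFDerivAt Uf (w (z + c) • (Bf z • m) + Bf z • fderiv ℝ w (z + c)) z :=
      fun z => (hshift w hwdiff z).mul (hBfz z)
    set k : Fin n → ℂ := fun j => κ * ((E j : ℝ) : ℂ) with hk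
    have hpdU : ∀ j : Fin n, (pd j Uf) = fun z =>
        fderiv ℝ w (z + c) (EuclideanSpace.single j 1) * Bf z + w (z + c) * Bf z * k j := by
      intro j; funext z
      show fderiv ℝ Uf z (EuclideanSpace.single j 1) = _
      rw [(hU1 z).fderiv]
      simp only [ContinuousLinearMap.add_apply, ContinuousLinearMap.smul_apply, smul_eq_mul,
        hmj j, hk]
      ring
    have hU2 : ∀ j : Fin n, pd j (pd j Uf) x
        = (fderiv ℝ (fun z => fderiv ℝ w z (EuclideanSpace.single j 1)) y)
            (EuclideanSpace.single j 1) * Bf x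
          + 2 * k j * (fderiv ℝ w y (EuclideanSpace.single j 1) * Bf x)
          + k j ^ 2 * (w y * Bf x) := by
      intro j
      have hA : HasFDerivAt (fun z : Eucl n =>
            fderiv ℝ w (z + c) (EuclideanSpace.single j 1) * Bf z + w (z + c) * Bf z * k j)
          ((fderiv ℝ w (x + c) (EuclideanSpace.single j 1)) • (Bf x • m)
            + Bf x • fderiv ℝ (fun z => fderiv ℝ w z (EuclideanSpace.single j 1)) (x + c)
            + k j • (w (x + c) • (Bf x • m) + Bf x • fderiv ℝ w (x + c))) x :=
        ((hshift (fun z => fderiv ℝ w z (EuclideanSpace.single j 1))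
            ((hpdwsm j).differentiable (by simp)) x).mul (hBfz x)).add
          (((hshift w hwdiff x).mul (hBfz x)).mul_const (k j))
      show fderiv ℝ (pd j Uf) x (EuclideanSpace.single j 1) = _
      rw [hpdU j, hA.fderiv]
      simp only [ContinuousLinearMap.add_apply, ContinuousLinearMap.smul_apply, smul_eq_mul,
        hmj j, ← hk, ← hy]
      ring
    -- basis sums
    have hEsum : ∀ (T : Eucl n →L[ℝ] ℂ), T E = ∑ j, ((E j : ℝ) : ℂ) * T (EuclideanSpace.single j 1) := by
      intro T
      conv_lhs => rw [← (EuclideanSpace.basisFun (Fin n) ℝ).sum_repr E]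
      rw [map_sum]
      exact Finset.sum_congr rfl fun j _ => by
        simp [EuclideanSpace.basisFun_apply, EuclideanSpace.basisFun_repr, real_smul]
    have hb2 : (b : ℂ) = ∑ j, ((E j : ℝ) : ℂ)^2 := by
      have h1 : b = ∑ j, (E j)^2 := by
        rw [hb, EuclideanSpace.norm_eq, Real.sq_sqrt (by positivity)]
        simp [_root_.sq_abs]
      rw [h1]
      push_cast
      rfl
    have hlap : lap Uf x = lap w y * Bf x + 2 * κ * (fderiv ℝ w y E * Bf x)
        + κ^2 * (b : ℂ) * (w y * Bf x) := by
      show (∑ j, pd j (pd j Uf) x) = _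
      rw [Finset.sum_congr rfl fun j _ => hU2 j, hEsum (fderiv ℝ w y), hb2]
      have hlw : lap w y = ∑ j, (fderiv ℝ (fun z => fderiv ℝ w z (EuclideanSpace.single j 1)) y)
          (EuclideanSpace.single j 1) := rfl
      rw [hlw]
      simp only [hk, Finset.sum_add_distrib, Finset.sum_mul, Finset.mul_sum]
      congr 1
      · congr 1
        exact Finset.sum_congr rfl fun j _ => by ring
      · exact Finset.sum_congr rfl fun j _ => by ring
    -- free-equation at (t,y)
    have hPderiv : deriv (fun s => v s y) t = fderiv ℝ F (t, y) (1, 0) := by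
      have hcurve : HasDerivAt (fun s : ℝ => ((s:ℝ), y)) ((1:ℝ), (0 : Eucl n)) t :=
        (hasDerivAt_id t).prodMk (hasDerivAt_const t y)
      exact (hFd.comp_hasDerivAt t hcurve).deriv
    have hveq := hv3 t trivial y
    rw [hPderiv, ← hwdef] at hveq
    simp only [Complex.ofReal_zero, zero_mul, zero_add] at hveq
    have hwd : HasFDerivAt w ((fderiv ℝ F (t, y)).comp
        ((0 : Eucl n →L[ℝ] ℝ).prod (ContinuousLinearMap.id ℝ (Eucl n)))) y :=
      hFd.comp y ((hasFDerivAt_const t y).prodMk (hasFDerivAt_id y))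
    have hQ : fderiv ℝ w y E = fderiv ℝ F (t, y) (0, E) := by
      rw [hwd.fderiv]
      simp
    have hsplit : fderiv ℝ F (t, y) (1, t • E)
        = fderiv ℝ F (t, y) (1, 0) + (t : ℂ) * fderiv ℝ F (t, y) (0, E) := by
      have h1 : ((1:ℝ), t • E) = ((1:ℝ), (0 : Eucl n)) + t • ((0:ℝ), E) := by
        simp [Prod.ext_iff]
      rw [h1, map_add, ContinuousLinearMap.map_smul, real_smul]
    have hvtx : v t (x + (t^2/2) • E) = w y := rfl
    have hnormB : ‖B‖ = 1 := by
      rw [hBdef, Complex.norm_exp]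
      have h0 : (-(Complex.I) * (((t * a + t^3/6 * b)/ε : ℝ) : ℂ)).re = 0 := by
        simp only [Complex.neg_re, Complex.mul_re, Complex.I_re, Complex.I_im,
          Complex.ofReal_re, Complex.ofReal_im]
        norm_num
      rw [h0, Real.exp_zero]
    have hnorm : ‖w y * B‖ ^ (2*σ) = ‖w y‖ ^ (2*σ) := by rw [norm_mul, hnormB, mul_one]
    rw [hvtx, hlap, hBfx, hsplit, hQ, hnorm, hκ]
    set P : ℂ := fderiv ℝ F (t, y) (1, 0) with hPd
    set Q : ℂ := fderiv ℝ F (t, y) (0, E) with hQd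
    set L : ℂ := lap w y with hLd
    set W : ℂ := w y with hWd
    set NN : ℝ := ‖W‖ ^ (2*σ) with hNNd
    clear_value c a b y w Bf B D m κ Uf k P Q L W NN
    clear hv1 hv2 hv3 hF hFd hγ hg1 hg2 hder_t hlin hBfz hmj hwdiff hshift hpdwsm hU1 hpdU
      hU2 hEsum hb2 hlap hPderiv hwd hQ hsplit hvtx hnormB hnorm hwsm hc ha hb hy hwdef
      hBfdef hBdef hD hm hκ hUfdef hk hPd hQd hLd hWd hNNd hFdef hBfx
    clear Bf Uf k D m κ c y w F
    push_cast
    field_simp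
    linear_combination (2*B) * hveq + (-(2*(a:ℂ)*W*B)) * Complex.I_sq
  · -- initial condition
    intro x
    simp
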